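/- Let C be a centralic category, let (X, ρ_X) and (Y, ρ_Y) be internal unitary magmas in C (i.e., ρ_X : X × X → X satisfies ρ_X ∘ ⟨1_X,0⟩ = 1_X = ρ_X ∘ ⟨0,1_X⟩, and similarly for ρ_Y). Then every morphism f : X → Y is a homomorphism of unitary magmas: f ∘ ρ_X = ρ_Y ∘ (f × f). -/

import Mathlib

open CategoryTheory CategoryTheory.Limits

universe v u

/-- A pointed category with binary products is *centralic*. -/
def Centralic (C : Type u) [Category.{v} C] [HasZeroObject C] [HasZeroMorphisms C]
    [HasBinaryProducts C] : Prop :=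
  ∀ ⦃X Y Z S : C⦄ (f : X ⨯ Y ⟶ Z) (x x' : S ⟶ X) (y : S ⟶ Y),
    prod.lift x 0 ≫ f = prod.lift x' 0 ≫ f →
    prod.lift x y ≫ f = prod.lift x' y ≫ f

/-- `ρ : A ⨯ B ⟶ X` is a cooperator for `f : A ⟶ X` and `g : B ⟶ X`. -/
def IsCooperator {C : Type u} [Category.{v} C] [HasZeroObject C] [HasZeroMorphisms C]
    [HasBinaryProducts C] {A B X : C} (f : A ⟶ X) (g : B ⟶ X) (ρ : A ⨯ B ⟶ X) : Prop :=
  prod.lift (𝟙 A) 0 ≫ ρ = f ∧ prod.lift 0 (𝟙 B) ≫ ρ = g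

/-- Two morphisms with common codomain commute if they admit a cooperator. -/
def Commutes {C : Type u} [Category.{v} C] [HasZeroObject C] [HasZeroMorphisms C]
    [HasBinaryProducts C] {A B X : C} (f : A ⟶ X) (g : B ⟶ X) : Prop :=
  ∃ ρ : A ⨯ B ⟶ X, IsCooperator f g ρ

/-- A morphism `f : A ⟶ B` is central if it commutes with `𝟙 B`. -/
def Central {C : Type u} [Category.{v} C] [HasZeroObject C] [HasZeroMorphisms C]
    [HasBinaryProducts C] {A B : C} (f : A ⟶ B) : Prop :=
  Commutes f (𝟙 B)

/-- Any morphism between internal unitary magmas is a magma homomorphism. -/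
theorem stmt16 (C : Type u) [Category.{v} C] [HasZeroObject C] [HasZeroMorphisms C]
    [HasBinaryProducts C] (hC : Centralic C)
    {X Y : C} (ρX : X ⨯ X ⟶ X) (ρY : Y ⨯ Y ⟶ Y)
    (hX₁ : prod.lift (𝟙 X) 0 ≫ ρX = 𝟙 X) (hX₂ : prod.lift 0 (𝟙 X) ≫ ρX = 𝟙 X)
    (hY₁ : prod.lift (𝟙 Y) 0 ≫ ρY = 𝟙 Y) (hY₂ : prod.lift 0 (𝟙 Y) ≫ ρY = 𝟙 Y)
    (f : X ⟶ Y) :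
    ρX ≫ f = prod.map f f ≫ ρY := by
  -- unit laws for generalized elements
  have unitRY : ∀ {S : C} (a : S ⟶ Y), prod.lift a 0 ≫ ρY = a := by
    intro S a
    have h : prod.lift a (0 : S ⟶ Y) = a ≫ prod.lift (𝟙 Y) 0 := by
      apply Limits.prod.hom_ext <;> simp
    rw [h, Category.assoc, hY₁, Category.comp_id]
  have unitLY : ∀ {S : C} (a : S ⟶ Y), prod.lift 0 a ≫ ρY = a := by
    intro S a
    have h : prod.lift (0 : S ⟶ Y) a = a ≫ prod.lift 0 (𝟙 Y) := by
      apply Limits.prod.hom_ext <;> simp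
    rw [h, Category.assoc, hY₂, Category.comp_id]
  have unitRX : ∀ {S : C} (a : S ⟶ X), prod.lift a 0 ≫ ρX = a := by
    intro S a
    have h : prod.lift a (0 : S ⟶ X) = a ≫ prod.lift (𝟙 X) 0 := by
      apply Limits.prod.hom_ext <;> simp
    rw [h, Category.assoc, hX₁, Category.comp_id]
  have unitLX : ∀ {S : C} (a : S ⟶ X), prod.lift 0 a ≫ ρX = a := by
    intro S a
    have h : prod.lift (0 : S ⟶ X) a = a ≫ prod.lift 0 (𝟙 X) := by
      apply Limits.prod.hom_ext <;> simp
    rw [h, Category.assoc, hX₂, Category.comp_id]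
  -- assoc variants
  have unitLX' : ∀ {S T : C} (a : S ⟶ X) (g : X ⟶ T),
      prod.lift 0 a ≫ ρX ≫ g = a ≫ g := by
    intro S T a g; rw [← Category.assoc, unitLX]
  have unitRX' : ∀ {S T : C} (a : S ⟶ X) (g : X ⟶ T),
      prod.lift a 0 ≫ ρX ≫ g = a ≫ g := by
    intro S T a g; rw [← Category.assoc, unitRX]
  -- the auxiliary morphism Σ((b,c),a) = ρY (f (ρX (a, b)), f c)
  set Sg : (X ⨯ X) ⨯ X ⟶ Y :=
    prod.lift (prod.lift prod.snd (prod.fst ≫ prod.fst) ≫ ρX ≫ f)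
      (prod.fst ≫ prod.snd ≫ f) ≫ ρY with hSg
  -- computation rule for precomposing Sg with a lift
  have comp : ∀ {S : C} (x : S ⟶ X ⨯ X) (y : S ⟶ X),
      prod.lift x y ≫ Sg =
        prod.lift (prod.lift y (x ≫ prod.fst) ≫ ρX ≫ f) (x ≫ prod.snd ≫ f) ≫ ρY := by
    intro S x y
    have h : prod.lift x y ≫
        prod.lift (prod.lift prod.snd (prod.fst ≫ prod.fst) ≫ ρX ≫ f)
          (prod.fst ≫ prod.snd ≫ f) =
        prod.lift (prod.lift y (x ≫ prod.fst) ≫ ρX ≫ f) (x ≫ prod.snd ≫ f) := by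
      have h0 : prod.lift x y ≫ prod.lift prod.snd (prod.fst ≫ prod.fst) =
          prod.lift y (x ≫ prod.fst) := by
        apply Limits.prod.hom_ext <;> simp [prod.lift_fst, prod.lift_snd, prod.lift_fst_assoc]
      apply Limits.prod.hom_ext
      · simp only [Category.assoc, prod.lift_fst]
        rw [← Category.assoc, h0]
      · simp [prod.lift_fst, prod.lift_snd, prod.lift_fst_assoc]
    rw [hSg, ← Category.assoc, h]
  have z00 : prod.lift (0 : X ⨯ X ⟶ X) (0 : X ⨯ X ⟶ X) = 0 := by
    apply Limits.prod.hom_ext <;> simp [prod.lift_fst, prod.lift_snd]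
  have cond : prod.lift (prod.lift prod.snd (0 : X ⨯ X ⟶ X)) (0 : X ⨯ X ⟶ X) ≫ Sg =
      prod.lift (prod.lift (0 : X ⨯ X ⟶ X) prod.snd) (0 : X ⨯ X ⟶ X) ≫ Sg := by
    rw [comp, comp]
    simp only [prod.lift_fst, prod.lift_snd, prod.lift_fst_assoc, prod.lift_snd_assoc,
      zero_comp, comp_zero]
    rw [unitLX', z00, zero_comp, unitRY, unitLY]
  have key := hC Sg (prod.lift prod.snd (0 : X ⨯ X ⟶ X))
    (prod.lift (0 : X ⨯ X ⟶ X) prod.snd) prod.fst cond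
  rw [comp, comp] at key
  simp only [prod.lift_fst, prod.lift_snd, prod.lift_fst_assoc, prod.lift_snd_assoc,
    zero_comp, comp_zero] at key
  rw [show prod.lift (prod.fst : X ⨯ X ⟶ X) prod.snd = 𝟙 (X ⨯ X) by
      apply Limits.prod.hom_ext <;> simp,
    Category.id_comp, unitRY, unitRX'] at key
  rw [key]
  congr 1
  apply Limits.prod.hom_ext <;> simp
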